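/- Let G be the weighted graph on corners C with edges between adjacent corners weighted by Manhattan distance. Define π̃ on the maze states by: if s is a corner, follow an optimal corner policy; otherwise move directly (axis-aligned) to the corner c ∈ S(s) ∩ C minimizing d(s,c) + V*_{M'}(c), where V*_{M'} is the shortest-path distance in G to the goal. Then π̃ is an optimal policy for the maze MDP: for every state s the total cost incurred by π̃ from s equals V*_M(s). -/

import Mathlib

open scoped BigOperators

namespace Maze

/-- Points of the `d`-dimensional integer maze. -/
abbrev Pt (d : ℕ) := Fin d → ℤ

/-- An open axis-aligned hyperrectangular obstacle determined by `a, b`. -/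
def Obst {d : ℕ} (a b : Pt d) : Set (Pt d) := {x | ∀ i, a i < x i ∧ x i < b i}

/-- The union of the `k` obstacles. -/
def OSet {d k : ℕ} (a b : Fin k → Pt d) : Set (Pt d) := ⋃ j, Obst (a j) (b j)

/-- The list of `i`-th coordinates of obstacle boundaries together with the goal coordinate. -/
def Lists {d k : ℕ} (a b : Fin k → Pt d) (g : Pt d) (i : Fin d) : Finset ℤ :=
  (Finset.univ.image fun j => a j i) ∪ (Finset.univ.image fun j => b j i) ∪ {g i}

/-- The surface (closed grid cell) of a point `x` with respect to coordinate lists `L`: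
`y` lies in the surface iff in every coordinate `i`, `y i` equals `x i` when `x i` is a
grid value, and otherwise `y i` lies between the grid values surrounding `x i`. -/
def Surf {d : ℕ} (L : Fin d → Finset ℤ) (x : Pt d) : Set (Pt d) :=
  {y | ∀ i, (x i ∈ L i → y i = x i) ∧ (∀ l ∈ L i, l < x i → l ≤ y i) ∧
      (∀ l ∈ L i, x i < l → y i ≤ l)}

/-- Corners: points all of whose coordinates are grid values. -/
def Corners {d : ℕ} (L : Fin d → Finset ℤ) : Set (Pt d) := {c | ∀ i, c i ∈ L i}

/-- Manhattan distance. -/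
def manh {d : ℕ} (s t : Pt d) : ℕ := ∑ i, (s i - t i).natAbs

/-- A unit move in a single coordinate. -/
def Step {d : ℕ} (x y : Pt d) : Prop :=
  ∃ i, (y i = x i + 1 ∨ y i = x i - 1) ∧ ∀ j, j ≠ i → y j = x j

/-- A maze path of length `n` from `s` to `t` avoiding the obstacle set `O`. -/
def IsMazePath {d : ℕ} (O : Set (Pt d)) (f : ℕ → Pt d) (n : ℕ) (s t : Pt d) : Prop :=
  f 0 = s ∧ f n = t ∧ (∀ m, m < n → Step (f m) (f (m + 1))) ∧ (∀ m, m ≤ n → f m ∉ O)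

/-- Minimal number of steps of an obstacle-avoiding maze path from `s` to `t`
(`⊤` if there is none). -/
noncomputable def mazeDist {d : ℕ} (O : Set (Pt d)) (s t : Pt d) : ℕ∞ :=
  sInf {N : ℕ∞ | ∃ n : ℕ, N = n ∧ ∃ f, IsMazePath O f n s t}

/-- Two corners are adjacent if they agree in all coordinates except one, where their
values are consecutive elements of the corresponding list, and the axis-aligned segment
between them avoids the obstacles. -/
def Adjacent {d : ℕ} (L : Fin d → Finset ℤ) (O : Set (Pt d)) (c c' : Pt d) : Prop :=
  c ∈ Corners L ∧ c' ∈ Corners L ∧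
  ∃ i, c i ≠ c' i ∧ (∀ j, j ≠ i → c j = c' j) ∧
    (∀ l ∈ L i, ¬(min (c i) (c' i) < l ∧ l < max (c i) (c' i))) ∧
    (∀ z : Pt d, (∀ j, j ≠ i → z j = c j) →
      min (c i) (c' i) ≤ z i → z i ≤ max (c i) (c' i) → z ∉ O)

/-- Shortest-path distance from `s` to `t` in the weighted corner graph, with edges
between adjacent corners weighted by their Manhattan distance. -/
noncomputable def cornerDist {d : ℕ} (L : Fin d → Finset ℤ) (O : Set (Pt d))
    (s t : Pt d) : ℕ∞ :=
  sInf {N : ℕ∞ | ∃ (n : ℕ) (c : ℕ → Pt d), c 0 = s ∧ c n = t ∧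
    (∀ m, m < n → Adjacent L O (c m) (c (m + 1))) ∧
    N = ∑ m ∈ Finset.range n, (manh (c m) (c (m + 1)) : ℕ∞)}

variable {d k : ℕ}

lemma manh_self (s : Pt d) : manh s s = 0 := by simp [manh]

lemma manh_eq_zero {s t : Pt d} (h : manh s t = 0) : s = t := by
  funext i
  have := Finset.sum_eq_zero_iff.mp h i (Finset.mem_univ i)
  omega

lemma manh_comm (s t : Pt d) : manh s t = manh t s := by
  unfold manh; apply Finset.sum_congr rfl; intro i _; omega

lemma manh_triangle (s t u : Pt d) : manh s u ≤ manh s t + manh t u := by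
  unfold manh; rw [← Finset.sum_add_distrib]
  apply Finset.sum_le_sum; intro i _; omega

lemma lists_a (a b : Fin k → Pt d) (g : Pt d) (j : Fin k) (i : Fin d) :
    a j i ∈ Lists a b g i := by
  simp only [Lists, Finset.mem_union]; left; left; exact Finset.mem_image.mpr ⟨j, Finset.mem_univ j, rfl⟩

lemma lists_b (a b : Fin k → Pt d) (g : Pt d) (j : Fin k) (i : Fin d) :
    b j i ∈ Lists a b g i := by
  simp only [Lists, Finset.mem_union]; left; right; exact Finset.mem_image.mpr ⟨j, Finset.mem_univ j, rfl⟩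

lemma lists_g (a b : Fin k → Pt d) (g : Pt d) (i : Fin d) :
    g i ∈ Lists a b g i := by simp [Lists]

lemma surf_self (L : Fin d → Finset ℤ) (x : Pt d) : x ∈ Surf L x := by
  intro i; exact ⟨fun _ => rfl, fun l _ h => le_of_lt h, fun l _ h => le_of_lt h⟩

/-- Box avoidance: any point between `x` and a corner of `x`'s surface avoids obstacles. -/
lemma box_avoid {a b : Fin k → Pt d} {g : Pt d} {x c y : Pt d}
    (hx : x ∉ OSet a b) (hc : c ∈ Surf (Lists a b g) x)
    (hy : ∀ i, min (x i) (c i) ≤ y i ∧ y i ≤ max (x i) (c i)) : y ∉ OSet a b := by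
  intro hyO
  rw [OSet, Set.mem_iUnion] at hyO
  obtain ⟨j, hj⟩ := hyO
  have hxj : x ∉ Obst (a j) (b j) := fun h => hx (Set.mem_iUnion.mpr ⟨j, h⟩)
  rw [Obst, Set.mem_setOf_eq] at hxj
  push_neg at hxj
  obtain ⟨i, hi⟩ := hxj
  have hyj := hj i
  rcases lt_or_ge (a j i) (x i) with h1 | h1
  · -- then b j i ≤ x i
    have h2 : b j i ≤ x i := hi h1
    rcases eq_or_lt_of_le h2 with he | hlt
    · -- x i = b j i ∈ L i, so c i = x i
      have : c i = x i := (hc i).1 (he ▸ lists_b a b g j i)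
      have := hy i
      omega
    · -- b j i < x i : list elem below x i, so b j i ≤ c i
      have := (hc i).2.1 (b j i) (lists_b a b g j i) hlt
      have := hy i
      omega
  · rcases eq_or_lt_of_le h1 with he | hlt
    · have : c i = x i := (hc i).1 (he ▸ lists_a a b g j i)
      have := hy i
      omega
    · have := (hc i).2.2 (a j i) (lists_a a b g j i) hlt
      have := hy i
      omega

/-- Reachability in `n` steps. -/
def Reach {d : ℕ} (O : Set (Pt d)) (n : ℕ) (s t : Pt d) : Prop :=
  ∃ f, IsMazePath O f n s t

lemma reach_refl {O : Set (Pt d)} {s : Pt d} (hs : s ∉ O) : Reach O 0 s s :=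
  ⟨fun _ => s, rfl, rfl, fun m hm => absurd hm (Nat.not_lt_zero m),
   fun m _ => hs⟩

lemma reach_trans {O : Set (Pt d)} {m n : ℕ} {s t u : Pt d}
    (h1 : Reach O m s t) (h2 : Reach O n t u) : Reach O (m + n) s u := by
  obtain ⟨f, hf0, hfn, hfs, hfO⟩ := h1
  obtain ⟨f', hf'0, hf'n, hf's, hf'O⟩ := h2
  refine ⟨fun j => if j ≤ m then f j else f' (j - m), by simp [hf0], ?_, ?_, ?_⟩
  · by_cases hn : n = 0
    · subst hn; simp [hfn, ← hf'n, ← hf'0]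
    · have : ¬ (m + n ≤ m) := by omega
      simp only [this, if_false]
      rw [show m + n - m = n by omega, hf'n]
  · intro j hj
    rcases lt_trichotomy j m with h | h | h
    · have h1' : j ≤ m := le_of_lt h
      have h2' : j + 1 ≤ m := h
      simp only [h1', h2', if_true]
      exact hfs j h
    · subst h
      have hn : 0 < n := by omega
      have : ¬ (j + 1 ≤ j) := by omega
      simp only [le_refl, if_true, this, if_false, show j + 1 - j = 1 by omega]
      rw [hfn, ← hf'0]
      exact hf's 0 hn
    · have h1' : ¬ (j ≤ m) := by omega
      have h2' : ¬ (j + 1 ≤ m) := by omega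
      simp only [h1', h2', if_false, show j + 1 - m = (j - m) + 1 by omega]
      exact hf's (j - m) (by omega)
  · intro j hj
    by_cases h : j ≤ m
    · simp only [h, if_true]; exact hfO j h
    · simp only [h, if_false]; exact hf'O (j - m) (by omega)

lemma reach_single {O : Set (Pt d)} {s t : Pt d} (hst : Step s t)
    (hs : s ∉ O) (ht : t ∉ O) : Reach O 1 s t := by
  refine ⟨fun j => if j = 0 then s else t, by simp, by simp, ?_, ?_⟩
  · intro m hm
    interval_cases m
    simpa using hst
  · intro m _
    by_cases h : m = 0 <;> simp [h, hs, ht]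

/-- Build a monotone staircase path inside a box all of whose points avoid `O`. -/
lemma reach_box {O : Set (Pt d)} (x c : Pt d)
    (hbox : ∀ y : Pt d, (∀ i, min (x i) (c i) ≤ y i ∧ y i ≤ max (x i) (c i)) → y ∉ O) :
    Reach O (manh x c) x c := by
  generalize hn : manh x c = n
  induction n generalizing x with
  | zero =>
    have : x = c := manh_eq_zero hn
    subst this
    exact reach_refl (hbox x (fun i => by omega))
  | succ n ih =>
    have hne : x ≠ c := by
      intro h; rw [h, manh_self] at hn; omega
    have : ∃ i, x i ≠ c i := by
      by_contra h
      push_neg at h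
      exact hne (funext h)
    obtain ⟨i, hi⟩ := this
    set v : ℤ := if x i < c i then x i + 1 else x i - 1 with hv
    set x1 : Pt d := Function.update x i v with hx1
    have hx1i : x1 i = v := Function.update_self i v x
    have hx1j : ∀ j, j ≠ i → x1 j = x j := fun j hj => Function.update_of_ne hj v x
    have hstep : Step x x1 := by
      refine ⟨i, ?_, hx1j⟩
      rw [hx1i, hv]
      split <;> simp
    have hmanh : manh x1 c = n := by
      have h1 : manh x c = (x i - c i).natAbs + ∑ j ∈ Finset.univ.erase i, (x j - c j).natAbs := by
        rw [manh, ← Finset.add_sum_erase _ _ (Finset.mem_univ i)]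
      have h2 : manh x1 c = (x1 i - c i).natAbs + ∑ j ∈ Finset.univ.erase i, (x1 j - c j).natAbs := by
        rw [manh, ← Finset.add_sum_erase _ _ (Finset.mem_univ i)]
      have h3 : ∑ j ∈ Finset.univ.erase i, (x1 j - c j).natAbs
          = ∑ j ∈ Finset.univ.erase i, (x j - c j).natAbs := by
        apply Finset.sum_congr rfl
        intro j hj
        rw [hx1j j (Finset.ne_of_mem_erase hj)]
      rw [h2, h3]
      rw [h1] at hn
      rw [hx1i, hv]
      split <;> omega
    have hbox1 : ∀ y : Pt d, (∀ j, min (x1 j) (c j) ≤ y j ∧ y j ≤ max (x1 j) (c j)) → y ∉ O := by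
      intro y hy
      apply hbox
      intro j
      by_cases hji : j = i
      · subst hji
        have := hy j
        rw [hx1i] at this
        rw [hv] at this
        split at this <;> omega
      · have := hy j
        rw [hx1j j hji] at this
        exact this
    have h1 : Reach O 1 x x1 := by
      apply reach_single hstep
      · exact hbox x (fun j => by omega)
      · apply hbox
        intro j
        by_cases hji : j = i
        · subst hji; rw [hx1i, hv]; split <;> omega
        · rw [hx1j j hji]; omega
    have := reach_trans h1 (ih x1 (hbox1) hmanh)
    simpa [Nat.add_comm] using this

lemma sInf_attained {S : Set ℕ∞} (h : sInf S ≠ ⊤) : sInf S ∈ S := by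
  obtain ⟨N, hN, hlt⟩ := sInf_lt_iff.mp ((ENat.lt_add_one_iff h).mpr le_rfl)
  have : N = sInf S := le_antisymm ((ENat.lt_add_one_iff h).mp hlt) (sInf_le hN)
  exact this ▸ hN

lemma mazeDist_le {O : Set (Pt d)} {n : ℕ} {s t : Pt d} (h : Reach O n s t) :
    mazeDist O s t ≤ n := by
  obtain ⟨f, hf⟩ := h
  exact sInf_le ⟨n, rfl, f, hf⟩

lemma reach_of_adjacent {L : Fin d → Finset ℤ} {O : Set (Pt d)} {c c' : Pt d}
    (h : Adjacent L O c c') : Reach O (manh c c') c c' := by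
  obtain ⟨-, -, i, -, hagree, -, hseg⟩ := h
  apply reach_box
  intro y hy
  have hyj : ∀ j, j ≠ i → y j = c j := by
    intro j hj
    have h1 := hy j
    have h2 := hagree j hj
    omega
  exact hseg y hyj (hy i).1 (hy i).2

/-- A corner chain yields a maze path of the same total weight. -/
lemma reach_of_chain {L : Fin d → Finset ℤ} {O : Set (Pt d)} :
    ∀ (n : ℕ) (c : ℕ → Pt d), (∀ m, m < n → Adjacent L O (c m) (c (m + 1))) →
      c 0 ∉ O → Reach O (∑ m ∈ Finset.range n, manh (c m) (c (m + 1))) (c 0) (c n) := by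
  intro n
  induction n with
  | zero => intro c _ h0; simpa using reach_refl h0
  | succ n ih =>
    intro c hadj h0
    have h1 := ih c (fun m hm => hadj m (by omega)) h0
    have h2 : Reach O (manh (c n) (c (n + 1))) (c n) (c (n + 1)) :=
      reach_of_adjacent (hadj n (by omega))
    rw [Finset.sum_range_succ]
    exact reach_trans h1 h2

/-- Membership form for cornerDist values. -/
lemma cornerDist_mem_form {L : Fin d → Finset ℤ} {O : Set (Pt d)} {s t : Pt d} {N : ℕ∞}
    (h : N ∈ {N : ℕ∞ | ∃ (n : ℕ) (c : ℕ → Pt d), c 0 = s ∧ c n = t ∧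
      (∀ m, m < n → Adjacent L O (c m) (c (m + 1))) ∧
      N = ∑ m ∈ Finset.range n, (manh (c m) (c (m + 1)) : ℕ∞)}) :
    ∃ (n : ℕ) (c : ℕ → Pt d), c 0 = s ∧ c n = t ∧
      (∀ m, m < n → Adjacent L O (c m) (c (m + 1))) ∧
      N = ((∑ m ∈ Finset.range n, manh (c m) (c (m + 1)) : ℕ) : ℕ∞) := by
  obtain ⟨n, c, h0, hn, hadj, hN⟩ := h
  exact ⟨n, c, h0, hn, hadj, by rw [hN]; push_cast; ring⟩

lemma mazeDist_le_corner {a b : Fin k → Pt d} {g : Pt d} {s c : Pt d}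
    (hs : s ∉ OSet a b) (hcS : c ∈ Surf (Lists a b g) s) (hcC : c ∈ Corners (Lists a b g)) :
    mazeDist (OSet a b) s g ≤ (manh s c : ℕ∞) + cornerDist (Lists a b g) (OSet a b) c g := by
  by_cases htop : cornerDist (Lists a b g) (OSet a b) c g = ⊤
  · rw [htop]; simp
  · obtain ⟨n, cs, h0, hn, hadj, hN⟩ := cornerDist_mem_form (sInf_attained htop)
    -- reach from s to c through the box
    have hreach1 : Reach (OSet a b) (manh s c) s c :=
      reach_box s c (fun y hy => box_avoid hs hcS hy)
    have hc : c ∉ OSet a b := box_avoid hs hcS (fun i => by omega)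
    have hreach2 := reach_of_chain n cs hadj (h0 ▸ hc)
    rw [h0, hn] at hreach2
    have := mazeDist_le (reach_trans hreach1 hreach2)
    calc mazeDist (OSet a b) s g ≤ ((manh s c + ∑ m ∈ Finset.range n, manh (cs m) (cs (m+1)) : ℕ) : ℕ∞) := this
      _ = (manh s c : ℕ∞) + cornerDist (Lists a b g) (OSet a b) c g := by
          rw [cornerDist, hN]; push_cast; ring

lemma cornerDist_self_le {L : Fin d → Finset ℤ} {O : Set (Pt d)} (t : Pt d) :
    cornerDist L O t t ≤ 0 :=
  sInf_le ⟨0, fun _ => t, rfl, rfl, fun m hm => absurd hm (Nat.not_lt_zero m), by simp⟩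

lemma cornerDist_le_adj {L : Fin d → Finset ℤ} {O : Set (Pt d)} {c c' t : Pt d}
    (h : Adjacent L O c c') :
    cornerDist L O c t ≤ (manh c c' : ℕ∞) + cornerDist L O c' t := by
  by_cases htop : cornerDist L O c' t = ⊤
  · rw [htop]; simp
  · obtain ⟨n, cs, h0, hn, hadj, hN⟩ := cornerDist_mem_form (sInf_attained htop)
    set cc : ℕ → Pt d := fun m => if m = 0 then c else cs (m - 1) with hcc
    have hcc0 : cc 0 = c := rfl
    have hccs : ∀ m, cc (m + 1) = cs m := fun m => by simp [hcc]
    apply sInf_le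
    refine ⟨n + 1, cc, hcc0, by rw [hccs n, hn], ?_, ?_⟩
    · intro m hm
      rcases Nat.eq_zero_or_pos m with h' | h'
      · subst h'; rw [hcc0, hccs 0, h0]; exact h
      · obtain ⟨m', rfl⟩ := Nat.exists_eq_succ_of_ne_zero (Nat.pos_iff_ne_zero.mp h')
        rw [hccs m', hccs (m' + 1)]
        exact hadj m' (by omega)
    · rw [cornerDist, hN, Finset.sum_range_succ']
      simp only [hccs, hcc0, h0]
      push_cast
      ring

lemma manh_step {s s' : Pt d} (h : Step s s') : manh s s' = 1 := by
  obtain ⟨i, hi, hj⟩ := h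
  rw [manh, ← Finset.add_sum_erase _ _ (Finset.mem_univ i)]
  have h1 : (s i - s' i).natAbs = 1 := by omega
  have h2 : ∑ j ∈ Finset.univ.erase i, (s j - s' j).natAbs = 0 := by
    apply Finset.sum_eq_zero
    intro j hjm
    have := hj j (Finset.ne_of_mem_erase hjm)
    omega
  omega

/-- If a step does not leave a grid hyperplane, surfaces only shrink. -/
lemma surf_step {L : Fin d → Finset ℤ} {s s' : Pt d} {i : Fin d}
    (hi : s' i = s i + 1 ∨ s' i = s i - 1) (hj : ∀ j, j ≠ i → s' j = s j)
    (hL : s i ∉ L i) {y : Pt d} (hy : y ∈ Surf L s') : y ∈ Surf L s := by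
  intro j
  by_cases hji : j = i
  · subst hji
    obtain ⟨A, B, C⟩ := hy j
    refine ⟨fun h => absurd h hL, ?_, ?_⟩
    · intro l hl hlt
      by_cases hls : l = s' j
      · have := A (hls ▸ hl); omega
      · have hlt' : l < s' j := by omega
        exact B l hl hlt'
    · intro l hl hlt
      by_cases hls : l = s' j
      · have := A (hls ▸ hl); omega
      · have hlt' : s' j < l := by omega
        exact C l hl hlt'
  · obtain ⟨A, B, C⟩ := hy j
    rw [hj j hji] at A B C
    exact ⟨A, B, C⟩

lemma bound_step {cd : ℕ∞} {m m' n : ℕ} (h1 : m ≤ 1 + m') (h2 : (m' : ℕ∞) + cd ≤ (n : ℕ∞)) :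
    (m : ℕ∞) + cd ≤ ((n + 1 : ℕ) : ℕ∞) := by
  calc (m : ℕ∞) + cd ≤ ((1 + m' : ℕ) : ℕ∞) + cd := by
        exact add_le_add_left (by exact_mod_cast h1) cd
    _ = 1 + ((m' : ℕ∞) + cd) := by push_cast; ring
    _ ≤ 1 + (n : ℕ∞) := add_le_add_right h2 1
    _ = ((n + 1 : ℕ) : ℕ∞) := by push_cast; ring

/-- Key induction: any maze path gives a corner-policy bound. -/
lemma key (a b : Fin k → Pt d) (g : Pt d) :
    ∀ (n : ℕ) (s : Pt d), Reach (OSet a b) n s g →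
    ∃ c, c ∈ Surf (Lists a b g) s ∧ c ∈ Corners (Lists a b g) ∧
      (manh s c : ℕ∞) + cornerDist (Lists a b g) (OSet a b) c g ≤ (n : ℕ∞) := by
  intro n
  induction n with
  | zero =>
    intro s hr
    obtain ⟨f, hf0, hfn, -, -⟩ := hr
    have hsg : s = g := by rw [← hf0, hfn]
    rw [hsg]
    refine ⟨g, surf_self _ g, fun i => lists_g a b g i, ?_⟩
    rw [manh_self]
    simpa using cornerDist_self_le g
  | succ n ih =>
    intro s hr
    obtain ⟨f, hf0, hfn, hfs, hfO⟩ := hr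
    set s' : Pt d := f 1 with hs'
    have hstep : Step s s' := hf0 ▸ hfs 0 (by omega)
    have hs : s ∉ OSet a b := hf0 ▸ hfO 0 (by omega)
    have hs'O : s' ∉ OSet a b := hfO 1 (by omega)
    have hr' : Reach (OSet a b) n s' g :=
      ⟨fun m => f (m + 1), rfl, hfn, fun m hm => hfs (m + 1) (by omega),
       fun m hm => hfO (m + 1) (by omega)⟩
    obtain ⟨c', hc'S, hc'C, hc'B⟩ := ih s' hr'
    obtain ⟨i, hi, hj⟩ := hstep
    by_cases hL : s i ∈ Lists a b g i
    · -- crossing case: move the corner back onto the hyperplane through `s`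
      set c : Pt d := Function.update c' i (s i) with hc
      have hci : c i = s i := Function.update_self i (s i) c'
      have hcj : ∀ j, j ≠ i → c j = c' j := fun j hji => Function.update_of_ne hji (s i) c'
      have hcS : c ∈ Surf (Lists a b g) s := by
        intro j
        by_cases hji : j = i
        · subst hji
          rw [hci]
          exact ⟨fun _ => rfl, fun l _ h => le_of_lt h, fun l _ h => le_of_lt h⟩
        · obtain ⟨A, B, C⟩ := hc'S j
          rw [hj j hji] at A B C
          rw [hcj j hji]
          exact ⟨A, B, C⟩
      have hcC : c ∈ Corners (Lists a b g) := by
        intro j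
        by_cases hji : j = i
        · subst hji; rw [hci]; exact hL
        · rw [hcj j hji]; exact hc'C j
      obtain ⟨A, B, C⟩ := hc'S i
      -- key 1-D facts
      have hkey : (s' i = s i + 1 ∧ s i ≤ c' i) ∨ (s' i = s i - 1 ∧ c' i ≤ s i) := by
        rcases hi with h | h
        · exact Or.inl ⟨h, B (s i) hL (by omega)⟩
        · exact Or.inr ⟨h, C (s i) hL (by omega)⟩
      -- manhattan accounting
      have e1 : manh s c = ∑ j ∈ Finset.univ.erase i, (s j - c' j).natAbs := by
        rw [manh, ← Finset.add_sum_erase _ _ (Finset.mem_univ i), hci]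
        rw [show (s i - s i).natAbs = 0 by omega, zero_add]
        apply Finset.sum_congr rfl
        intro j hjm
        rw [hcj j (Finset.ne_of_mem_erase hjm)]
      have e2 : manh c c' = (s i - c' i).natAbs := by
        rw [manh, ← Finset.add_sum_erase _ _ (Finset.mem_univ i), hci]
        have : ∑ j ∈ Finset.univ.erase i, (c j - c' j).natAbs = 0 := by
          apply Finset.sum_eq_zero
          intro j hjm
          rw [hcj j (Finset.ne_of_mem_erase hjm)]
          omega
        omega
      have e3 : manh s' c' = (s' i - c' i).natAbs + ∑ j ∈ Finset.univ.erase i, (s j - c' j).natAbs := by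
        rw [manh, ← Finset.add_sum_erase _ _ (Finset.mem_univ i)]
        congr 1
        apply Finset.sum_congr rfl
        intro j hjm
        rw [hj j (Finset.ne_of_mem_erase hjm)]
      have harith : manh s c + manh c c' ≤ 1 + manh s' c' := by
        rw [e1, e2, e3]
        have : (s i - c' i).natAbs ≤ 1 + (s' i - c' i).natAbs := by
          rcases hi with h | h <;> omega
        omega
      by_cases heq : c' i = s i
      · -- the corner already lies on the hyperplane: c = c'
        have hcc' : c = c' := by
          rw [hc, ← heq, Function.update_eq_self]
        refine ⟨c, hcS, hcC, ?_⟩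
        rw [hcc']
        apply bound_step _ hc'B
        calc manh s c' ≤ manh s s' + manh s' c' := manh_triangle s s' c'
          _ = 1 + manh s' c' := by rw [manh_step ⟨i, hi, hj⟩]
      · -- build the adjacency c ~ c'
        have hadj : Adjacent (Lists a b g) (OSet a b) c c' := by
          refine ⟨hcC, hc'C, i, by rw [hci]; exact fun h => heq h.symm, hcj, ?_, ?_⟩
          · intro l hl hbet
            rw [hci] at hbet
            by_cases hls : l = s' i
            · have := A (hls ▸ hl)
              rcases hkey with ⟨h, h'⟩ | ⟨h, h'⟩ <;> omega
            · have hB := fun hlt => B l hl hlt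
              have hC := fun hlt => C l hl hlt
              rcases hkey with ⟨h, h'⟩ | ⟨h, h'⟩
              · have hgt : s' i < l := by omega
                have := C l hl hgt
                omega
              · have hlt : l < s' i := by omega
                have := B l hl hlt
                omega
          · intro z hzj hz1 hz2
            rw [hci] at hz1 hz2
            by_cases hz : z i = s i
            · have hzc : z = c := by
                funext j
                by_cases hji : j = i
                · subst hji; rw [hz, hci]
                · exact hzj j hji
              rw [hzc]
              exact box_avoid hs hcS (fun j => by omega)
            · apply box_avoid hs'O hc'S
              intro j
              by_cases hji : j = i
              · subst hji
                rcases hkey with ⟨h, h'⟩ | ⟨h, h'⟩ <;> omega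
              · rw [hzj j hji, hcj j hji]
                have := hj j hji
                omega
        refine ⟨c, hcS, hcC, ?_⟩
        have h1 : cornerDist (Lists a b g) (OSet a b) c g ≤
            (manh c c' : ℕ∞) + cornerDist (Lists a b g) (OSet a b) c' g :=
          cornerDist_le_adj hadj
        calc (manh s c : ℕ∞) + cornerDist (Lists a b g) (OSet a b) c g
            ≤ (manh s c : ℕ∞) + ((manh c c' : ℕ∞) + cornerDist (Lists a b g) (OSet a b) c' g) :=
              add_le_add_right h1 _
          _ = ((manh s c + manh c c' : ℕ) : ℕ∞) + cornerDist (Lists a b g) (OSet a b) c' g := by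
              push_cast; ring
          _ ≤ ((n + 1 : ℕ) : ℕ∞) := bound_step harith hc'B
    · -- no hyperplane crossed: reuse c'
      have hcS : c' ∈ Surf (Lists a b g) s := surf_step hi hj hL hc'S
      refine ⟨c', hcS, hc'C, ?_⟩
      apply bound_step _ hc'B
      calc manh s c' ≤ manh s s' + manh s' c' := manh_triangle s s' c'
        _ = 1 + manh s' c' := by rw [manh_step ⟨i, hi, hj⟩]

/-- Every surface contains a corner. -/
lemma exists_corner (a b : Fin k → Pt d) (g : Pt d) (s : Pt d) :
    ∃ c, c ∈ Surf (Lists a b g) s ∧ c ∈ Corners (Lists a b g) := by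
  classical
  set L := Lists a b g with hLdef
  have hLne : ∀ i, (L i).Nonempty := fun i => ⟨g i, lists_g a b g i⟩
  have hex : ∀ i, ∃ v : ℤ, v ∈ L i ∧ (s i ∈ L i → v = s i) ∧
      (∀ l ∈ L i, l < s i → l ≤ v) ∧ (∀ l ∈ L i, s i < l → v ≤ l) := by
    intro i
    by_cases h1 : s i ∈ L i
    · exact ⟨s i, h1, fun _ => rfl, fun l _ h => le_of_lt h, fun l _ h => le_of_lt h⟩
    · by_cases h2 : ((L i).filter (fun t => t < s i)).Nonempty
      · have hmem : ((L i).filter (fun t => t < s i)).max' h2 ∈ (L i).filter (fun t => t < s i) :=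
          Finset.max'_mem _ h2
        rw [Finset.mem_filter] at hmem
        refine ⟨((L i).filter (fun t => t < s i)).max' h2, hmem.1, fun h => absurd h h1, ?_, ?_⟩
        · intro l hl hlt'
          exact Finset.le_max' ((L i).filter (fun t => t < s i)) l (Finset.mem_filter.mpr ⟨hl, hlt'⟩)
        · intro l _ hlt'
          have := hmem.2
          omega
      · refine ⟨(L i).min' (hLne i), Finset.min'_mem _ _, fun h => absurd h h1, ?_, ?_⟩
        · intro l hl hlt'
          exact absurd ⟨l, Finset.mem_filter.mpr ⟨hl, hlt'⟩⟩ h2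
        · intro l hl _
          exact Finset.min'_le _ l hl
  choose c hc using hex
  exact ⟨c, fun i => ⟨(hc i).2.1, (hc i).2.2.1, (hc i).2.2.2⟩, fun i => (hc i).1⟩

/-- the policy `π̃` is optimal: from any state `s` not in an obstacle there
is a corner `c` in the surface of `s` minimizing `d(s,c) + V*_{M'}(c)`, and moving
directly to `c` and then following shortest corner paths achieves the optimal maze value
`V*_M(s)`. -/
theorem pi_tilde_optimal {d k : ℕ} (a b : Fin k → Pt d) (g : Pt d) (s : Pt d)
    (hs : s ∉ OSet a b) :
    ∃ c ∈ Surf (Lists a b g) s ∩ Corners (Lists a b g),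
      (∀ c' ∈ Surf (Lists a b g) s ∩ Corners (Lists a b g),
        (manh s c : ℕ∞) + cornerDist (Lists a b g) (OSet a b) c g ≤
          (manh s c' : ℕ∞) + cornerDist (Lists a b g) (OSet a b) c' g) ∧
      (manh s c : ℕ∞) + cornerDist (Lists a b g) (OSet a b) c g =
        mazeDist (OSet a b) s g := by
  by_cases hM : mazeDist (OSet a b) s g = ⊤
  · obtain ⟨c, hcS, hcC⟩ := exists_corner a b g s
    have hall : ∀ c', c' ∈ Surf (Lists a b g) s → c' ∈ Corners (Lists a b g) →
        (manh s c' : ℕ∞) + cornerDist (Lists a b g) (OSet a b) c' g = ⊤ := by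
      intro c' h1 h2
      have := mazeDist_le_corner hs h1 h2
      rw [hM] at this
      exact top_le_iff.mp this
    refine ⟨c, ⟨hcS, hcC⟩, fun c'' hc'' => ?_, ?_⟩
    · rw [hall c'' hc''.1 hc''.2]
      exact le_top
    · rw [hall c hcS hcC, hM]
  · have hmem : mazeDist (OSet a b) s g ∈
        {N : ℕ∞ | ∃ n : ℕ, N = n ∧ ∃ f, IsMazePath (OSet a b) f n s g} := sInf_attained hM
    obtain ⟨n, hn, f, hf⟩ := hmem
    obtain ⟨c, hcS, hcC, hb⟩ := key a b g n s ⟨f, hf⟩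
    have hub := mazeDist_le_corner hs hcS hcC
    have heq : (manh s c : ℕ∞) + cornerDist (Lists a b g) (OSet a b) c g =
        mazeDist (OSet a b) s g := le_antisymm (by rw [hn]; exact hb) hub
    refine ⟨c, ⟨hcS, hcC⟩, fun c'' hc'' => ?_, heq⟩
    rw [heq]
    exact mazeDist_le_corner hs hc''.1 hc''.2

end Maze
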